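/- Let G be a finite graph, let d and q be positive integers, and let A, B be vertex subsets of G. For all a ∈ A and b ∈ B, let 𝓕_{a,b} be the family of vertex sets of paths in G of length at most d with one endpoint a and the other endpoint b, and let 𝓕'_{a,b} be a subfamily of 𝓕_{a,b} that q-represents 𝓕_{a,b}. Let G' be the subgraph of G induced by A ∪ B together with the union of all sets in all the families 𝓕'_{a,b}. Then for every vertex set S with |S| ≤ q and all A' ⊆ A and B' ⊆ B: if S d-separates A' and B' in G', then S d-separates A' and B' in G. -/

import Mathlib

open SimpleGraph

/-- `S` `d`-separates `A` and `B` in `G` if every path in `G` of length at most `d`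
with one endpoint in `A` and the other in `B` contains a vertex of `S`. -/
def DSeparates {V : Type} (G : SimpleGraph V) (d : ℕ) (S A B : Set V) : Prop :=
  ∀ a ∈ A, ∀ b ∈ B, ∀ p : G.Walk a b, p.IsPath → p.length ≤ d → ∃ s ∈ S, s ∈ p.support

/-- The family of vertex sets of paths in `G` of length at most `d` with endpoints
`a` and `b`. -/
def pathVertexSets {V : Type} [DecidableEq V] (G : SimpleGraph V) (d : ℕ) (a b : V) :
    Set (Finset V) :=
  {X | ∃ p : G.Walk a b, p.IsPath ∧ p.length ≤ d ∧ X = p.support.toFinset}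

/-- The subgraph of `G` induced by the vertex set `W` (kept on the same vertex type:
edges are the edges of `G` with both endpoints in `W`). -/
def restrictTo {V : Type} (G : SimpleGraph V) (W : Set V) : SimpleGraph V where
  Adj u v := u ∈ W ∧ v ∈ W ∧ G.Adj u v
  symm := ⟨by rintro u v ⟨hu, hv, h⟩; exact ⟨hv, hu, h.symm⟩⟩
  loopless := ⟨by rintro v ⟨_, _, h⟩; exact h.ne rfl⟩

theorem separation_localization {V : Type} [Fintype V] [DecidableEq V]
    (G : SimpleGraph V) (d q : ℕ) (hd : 0 < d) (hq : 0 < q) (A B : Set V)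
    (F' : ∀ a b : V, Set (Finset V))
    (hsub : ∀ a ∈ A, ∀ b ∈ B, F' a b ⊆ pathVertexSets G d a b)
    (hrep : ∀ a ∈ A, ∀ b ∈ B, ∀ S : Finset V, S.card ≤ q →
        (∃ X ∈ pathVertexSets G d a b, Disjoint X S) → ∃ X ∈ F' a b, Disjoint X S)
    (S : Finset V) (hS : S.card ≤ q)
    (A' B' : Set V) (hA' : A' ⊆ A) (hB' : B' ⊆ B)
    (hsep : DSeparates
        (restrictTo G (A ∪ B ∪ ⋃ a ∈ A, ⋃ b ∈ B, ⋃ X ∈ F' a b, (X : Set V)))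
        d ↑S A' B') :
    DSeparates G d ↑S A' B' := by
  intro a ha b hb p hp hlen
  by_contra hcon
  push_neg at hcon
  have hdisj : Disjoint p.support.toFinset S := by
    rw [Finset.disjoint_left]
    intro v hv hvS
    exact hcon v hvS (List.mem_toFinset.mp hv)
  obtain ⟨X, hXF, hXdisj⟩ := hrep a (hA' ha) b (hB' hb) S hS
    ⟨p.support.toFinset, ⟨p, hp, hlen, rfl⟩, hdisj⟩
  obtain ⟨p', hp', hlen', hXeq⟩ := hsub a (hA' ha) b (hB' hb) hXF
  set W : Set V := A ∪ B ∪ ⋃ a ∈ A, ⋃ b ∈ B, ⋃ X ∈ F' a b, (X : Set V) with hW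
  have hsupW : ∀ v ∈ p'.support, v ∈ W := by
    intro v hv
    have hvX : v ∈ X := by rw [hXeq]; exact List.mem_toFinset.mpr hv
    refine Or.inr ?_
    simp only [Set.mem_iUnion]
    exact ⟨a, hA' ha, b, hB' hb, X, hXF, hvX⟩
  have hedges : ∀ e ∈ p'.edges, e ∈ (restrictTo G W).edgeSet := by
    intro e he
    induction e using Sym2.ind with
    | _ u v =>
      exact ⟨hsupW u (p'.fst_mem_support_of_mem_edges he),
        hsupW v (p'.snd_mem_support_of_mem_edges he),
        p'.edges_subset_edgeSet he⟩
  obtain ⟨s, hsS, hs⟩ := hsep a ha b hb (p'.transfer _ hedges)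
    (hp'.transfer hedges) (by rwa [Walk.length_transfer])
  rw [Walk.support_transfer] at hs
  exact Finset.disjoint_left.mp hXdisj
    (by rw [hXeq]; exact List.mem_toFinset.mpr hs) hsS
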